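/- Let Ξ be a finite subset of a d-dimensional real vector space M whose convex hull is d-dimensional. Let λ be a linear functional on M and suppose Ξ_{λ>0} := {χ ∈ Ξ : λ(χ) > 0} is maximal among all sets of the form Ξ_{μ>0} as μ ranges over nonzero linear functionals (ordered by inclusion). Then the convex hull of Ξ_{λ>0} has dimension at least d−1. -/

import Mathlib

/-- If `Ξ` is a finite subset of a `d`-dimensional real vector space whose convex
hull is full-dimensional and `Ξ_{λ>0}` is maximal among the sets `Ξ_{μ>0}` for nonzero linear
functionals `μ`, then `conv(Ξ_{λ>0})` has dimension at least `d - 1`. -/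
theorem stmt2 {M : Type*} [AddCommGroup M] [Module ℝ M] [FiniteDimensional ℝ M]
    (Ξ : Finset M) (hfull : affineSpan ℝ (Ξ : Set M) = ⊤)
    (lam : Module.Dual ℝ M) (hlam : lam ≠ 0)
    (hmax : ∀ μ : Module.Dual ℝ M, μ ≠ 0 →
      {χ : M | χ ∈ Ξ ∧ 0 < lam χ} ⊆ {χ : M | χ ∈ Ξ ∧ 0 < μ χ} →
      {χ : M | χ ∈ Ξ ∧ 0 < lam χ} = {χ : M | χ ∈ Ξ ∧ 0 < μ χ}) :
    Module.finrank ℝ M - 1 ≤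
      Module.finrank ℝ (affineSpan ℝ {χ : M | χ ∈ Ξ ∧ 0 < lam χ}).direction := by
  classical
  set S : Set M := {χ : M | χ ∈ Ξ ∧ 0 < lam χ} with hS
  by_contra hcon
  rw [not_le] at hcon
  set d := Module.finrank ℝ M with hd
  -- d ≥ 1 since lam ≠ 0
  obtain ⟨x0, hx0⟩ : ∃ x : M, lam x ≠ 0 := by
    by_contra h
    push_neg at h
    exact hlam (by ext x; simp [h x])
  have hMnt : Nontrivial M := ⟨x0, 0, fun h => hx0 (by simp [h])⟩
  have hd1 : 1 ≤ d := Module.finrank_pos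
  -- span of S has finrank < d
  set V : Submodule ℝ M := Submodule.span ℝ S with hV
  have hVlt : Module.finrank ℝ V < d := by
    rcases S.eq_empty_or_nonempty with hSe | ⟨χs, hχs⟩
    · rw [hV, hSe, Submodule.span_empty, finrank_bot]
      omega
    · have hW : Module.finrank ℝ (affineSpan ℝ S).direction < d - 1 := hcon
      have hsub : V ≤ (affineSpan ℝ S).direction ⊔ Submodule.span ℝ {χs} := by
        rw [hV]
        apply Submodule.span_le.mpr
        intro χ hχ
        have h1 : χ - χs ∈ (affineSpan ℝ S).direction := by
          rw [direction_affineSpan]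
          exact vsub_mem_vectorSpan ℝ hχ hχs
        have h2 : χs ∈ Submodule.span ℝ ({χs} : Set M) :=
          Submodule.mem_span_singleton_self χs
        rw [show χ = (χ - χs) + χs from (sub_add_cancel χ χs).symm]
        exact Submodule.add_mem _ (Submodule.mem_sup_left h1) (Submodule.mem_sup_right h2)
      have hsup : Module.finrank ℝ
            ((affineSpan ℝ S).direction ⊔ Submodule.span ℝ {χs} : Submodule ℝ M)
          ≤ Module.finrank ℝ (affineSpan ℝ S).direction + 1 := by
        have := Submodule.finrank_sup_add_finrank_inf_eq (affineSpan ℝ S).direction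
          (Submodule.span ℝ {χs})
        have hsing : Module.finrank ℝ (Submodule.span ℝ ({χs} : Set M)) ≤ 1 := by
          rcases eq_or_ne χs 0 with h0 | h0
          · rw [h0, Submodule.span_zero_singleton, finrank_bot]
            exact Nat.zero_le 1
          · rw [finrank_span_singleton h0]
        omega
      have := (Submodule.finrank_mono hsub).trans hsup
      omega
  have hVne : V ≠ ⊤ := by
    intro h
    rw [h, finrank_top] at hVlt
    omega
  -- get a nonzero functional vanishing on V
  obtain ⟨ν, hν0, hνV⟩ := Submodule.exists_dual_map_eq_bot_of_lt_top
    (p := V) (lt_top_iff_ne_top.mpr hVne) inferInstance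
  have hνS : ∀ χ ∈ S, ν χ = 0 := by
    intro χ hχ
    have : ν χ ∈ Submodule.map ν V := ⟨χ, Submodule.subset_span hχ, rfl⟩
    rw [hνV] at this
    simpa using this
  -- Ξ spans M linearly
  have hspan : Submodule.span ℝ (Ξ : Set M) = ⊤ := by
    rw [eq_top_iff]
    intro x _
    have hx : x ∈ affineSpan ℝ (Ξ : Set M) := hfull ▸ AffineSubspace.mem_top ℝ M x
    have hle : affineSpan ℝ (Ξ : Set M) ≤ (Submodule.span ℝ (Ξ : Set M)).toAffineSubspace :=
      affineSpan_le.mpr (fun y hy => Submodule.subset_span hy)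
    exact hle hx
  -- find χ0 ∈ Ξ with ν χ0 ≠ 0
  obtain ⟨χ0, hχ0Ξ, hνχ0⟩ : ∃ χ0 ∈ Ξ, ν χ0 ≠ 0 := by
    by_contra h
    push_neg at h
    apply hν0
    have : Submodule.span ℝ (Ξ : Set M) ≤ LinearMap.ker ν :=
      Submodule.span_le.mpr (fun y hy => h y hy)
    rw [hspan] at this
    ext x
    simpa using this (Submodule.mem_top (x := x))
  have hχ0S : χ0 ∉ S := by
    intro h
    exact hνχ0 (hνS χ0 h)
  -- construct μ
  set t : ℝ := (1 - lam χ0) / ν χ0 with ht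
  set μ : Module.Dual ℝ M := lam + t • ν with hμ
  have hμχ0 : μ χ0 = 1 := by
    simp only [hμ, LinearMap.add_apply, LinearMap.smul_apply, smul_eq_mul, ht]
    field_simp
    ring
  have hμ0 : μ ≠ 0 := by
    intro h
    rw [h] at hμχ0
    simp at hμχ0
  have hsubμ : S ⊆ {χ : M | χ ∈ Ξ ∧ 0 < μ χ} := by
    intro χ hχ
    refine ⟨hχ.1, ?_⟩
    simp only [hμ, LinearMap.add_apply, LinearMap.smul_apply, smul_eq_mul, hνS χ hχ, mul_zero,
      add_zero]
    exact hχ.2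
  have heq := hmax μ hμ0 hsubμ
  apply hχ0S
  show χ0 ∈ S
  rw [heq]
  exact ⟨hχ0Ξ, by rw [hμχ0]; norm_num⟩
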